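/- Let n ≥ 3, m ≥ 1, and k ≥ 2 be integers and let C ∼ D_Ind(n,m), i.e., the m clauses are i.i.d. uniform over all 8·binom(n,3) possible clauses. Then the expected number of k-element sets of hyperedge indices of the variable hypergraph of C that form a Berge path of length k is at most m^k · (9/n) · (6/n)^{k−2}. -/

import Mathlib

open scoped Classical

/-- A literal over `n` Boolean variables: a (variable, sign) pair. -/
abbrev Lit (n : ℕ) := Fin n × Bool

/-- A clause: a set of three literals whose three variables are pairwise distinct. -/
abbrev Clause (n : ℕ) :=
  {s : Finset (Lit n) // s.card = 3 ∧ (s.image Prod.fst).card = 3}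

/-- A 3-SAT instance: a sequence of `m` clauses over `n` variables. -/
abbrev SatInstance (n m : ℕ) := Fin m → Clause n

/-- The assignment `σ` makes at least one literal of clause `c` true. -/
def Satisfies {n : ℕ} (σ : Fin n → Bool) (c : Clause n) : Prop :=
  ∃ ℓ ∈ c.1, σ ℓ.1 = ℓ.2

/-- The instance `C` is satisfiable. -/
def SAT {n m : ℕ} (C : SatInstance n m) : Prop :=
  ∃ σ : Fin n → Bool, ∀ i, Satisfies σ (C i)

/-- Probability of the event `P` under the distribution (weight function) `D`. -/
noncomputable def pr {α : Type*} [Fintype α] (D : α → ℝ) (P : α → Prop) : ℝ :=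
  ∑ a ∈ Finset.univ.filter P, D a

/-- `D` is a probability distribution on the finite type `α`. -/
def IsDistribution {α : Type*} [Fintype α] (D : α → ℝ) : Prop :=
  (∀ a, 0 ≤ D a) ∧ ∑ a, D a = 1

/-- The clauses of a random instance drawn from `D` are `k`-wise independent with
uniform marginals: any `k` clauses at distinct positions are jointly uniform,
each over the `M = 8 * (n choose 3)` possible clauses.
`IsDistribution D ∧ KWiseUniform n m k D` says `D ∈ 𝔇_k(n,m)`. -/
def KWiseUniform (n m k : ℕ) (D : SatInstance n m → ℝ) : Prop :=
  ∀ idx : Fin k → Fin m, Function.Injective idx →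
    ∀ t : Fin k → Clause n,
      pr D (fun C => ∀ j, C (idx j) = t j) = (1 / (8 * (n.choose 3 : ℝ))) ^ k

/-- `ξ(C)`: the number of unordered pairs `{i, j}` with `i ≠ j` and `c_i = c_j`. -/
noncomputable def xi {n m : ℕ} (C : SatInstance n m) : ℕ :=
  (Finset.univ.filter fun p : Fin m × Fin m => p.1 < p.2 ∧ C p.1 = C p.2).card

/-- An edge index of the bipartite multigraph `G(C)`: a clause position together with the
literal serving as the right endpoint (the left endpoint is the remaining literal pair). -/
abbrev EdgeIdx (n m : ℕ) := Fin m × Lit n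

/-- `e` is an actual edge of the multigraph `G(C)`. -/
def isEdge {n m : ℕ} (C : SatInstance n m) (e : EdgeIdx n m) : Prop :=
  e.2 ∈ (C e.1).1

/-- The left endpoint (pair of literals) of the edge `e` of `G(C)`. -/
def leftV {n m : ℕ} (C : SatInstance n m) (e : EdgeIdx n m) : Finset (Lit n) :=
  (C e.1).1.erase e.2

/-- `s` is a `K_{2,2}`-edge-set of the multigraph `G(C)`: four edges of the form
`u–v, u–v', u'–v, u'–v'` with `u ≠ u'` and `v ≠ v'`. -/
def IsK22 {n m : ℕ} (C : SatInstance n m) (s : Finset (EdgeIdx n m)) : Prop :=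
  s.card = 4 ∧ (∀ e ∈ s, isEdge C e) ∧
  ∃ u u' : Finset (Lit n), ∃ v v' : Lit n, u ≠ u' ∧ v ≠ v' ∧
    s.image (fun e => (leftV C e, e.2)) = {(u, v), (u, v'), (u', v), (u', v')}

/-- `κ(C)`: the number of `K_{2,2}`-edge-sets of the multigraph `G(C)`. -/
noncomputable def kappa {n m : ℕ} (C : SatInstance n m) : ℕ :=
  (Finset.univ.filter fun s : Finset (EdgeIdx n m) => IsK22 C s).card

/-- Adjacency in the simple bipartite graph `G(C̃)` of a set `T` of distinct clauses:
the literal pair `u` is adjacent to the literal `v`. -/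
def adjSet {n : ℕ} (T : Finset (Clause n)) (u : Finset (Lit n)) (v : Lit n) : Prop :=
  v ∉ u ∧ ∃ c ∈ T, c.1 = insert v u

/-- `κ(C̃)` for a set `T` of pairwise distinct clauses: the number of `K_{2,2}` subgraphs of
the simple bipartite graph `G(C̃)`, computed as `Σ_{{v,v'}} binom(|B_{v,v'}|, 2)`. -/
noncomputable def kappaSet {n : ℕ} (T : Finset (Clause n)) : ℕ :=
  ∑ p ∈ (Finset.univ : Finset (Lit n)).powersetCard 2,
    ((Finset.univ.filter fun u : Finset (Lit n) => ∀ v ∈ p, adjSet T u v).card).choose 2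

/-- `m̃(C)`: the number of pairwise distinct clauses occurring in `C`. -/
noncomputable def distinctCount {n m : ℕ} (C : SatInstance n m) : ℕ :=
  (Finset.univ.image C).card

/-- The set of the three variables of a clause. -/
def clVars {n : ℕ} (c : Clause n) : Finset (Fin n) := c.1.image Prod.fst

/-- `f` lists (the indices of) hyperedges of the variable hypergraph of `C` forming a
Berge path: consecutive hyperedges share exactly one vertex, non-consecutive ones
are disjoint. -/
def IsBergePathOrder {n m : ℕ} (C : SatInstance n m) {k : ℕ} (f : Fin k → Fin m) : Prop :=
  Function.Injective f ∧
  (∀ i j : Fin k, (j : ℕ) = (i : ℕ) + 1 →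
    (clVars (C (f i)) ∩ clVars (C (f j))).card = 1) ∧
  (∀ i j : Fin k, i ≠ j → (j : ℕ) ≠ (i : ℕ) + 1 → (i : ℕ) ≠ (j : ℕ) + 1 →
    Disjoint (clVars (C (f i))) (clVars (C (f j))))

/-- `j` follows `i` cyclically in `Fin ℓ`. -/
def CycConsec (ℓ : ℕ) (i j : Fin ℓ) : Prop := (j : ℕ) = ((i : ℕ) + 1) % ℓ

/-- `f` lists (the indices of) hyperedges of the variable hypergraph of `C` forming a
Berge cycle (of length `ℓ ≥ 3`): cyclically consecutive hyperedges share exactly one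
vertex, non-consecutive ones are disjoint. -/
def IsBergeCycleOrder {n m : ℕ} (C : SatInstance n m) {ℓ : ℕ} (f : Fin ℓ → Fin m) : Prop :=
  Function.Injective f ∧
  (∀ i j : Fin ℓ, CycConsec ℓ i j →
    (clVars (C (f i)) ∩ clVars (C (f j))).card = 1) ∧
  (∀ i j : Fin ℓ, i ≠ j → ¬ CycConsec ℓ i j → ¬ CycConsec ℓ j i →
    Disjoint (clVars (C (f i))) (clVars (C (f j))))

/-- The number of `k`-element sets of hyperedge indices of the variable hypergraph of `C`
that form a Berge path of length `k`. -/
noncomputable def bergePathSetCount (n m k : ℕ) (C : SatInstance n m) : ℕ :=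
  (Finset.univ.filter fun s : Finset (Fin m) =>
    s.card = k ∧ ∃ f : Fin k → Fin m, (∀ i, f i ∈ s) ∧ IsBergePathOrder C f).card

/-- The number of `ℓ`-element sets of hyperedge indices of the variable hypergraph of `C`
that form a Berge cycle of length `ℓ`. -/
noncomputable def bergeCycleSetCount (n m ℓ : ℕ) (C : SatInstance n m) : ℕ :=
  (Finset.univ.filter fun s : Finset (Fin m) =>
    s.card = ℓ ∧ ∃ f : Fin ℓ → Fin m, (∀ i, f i ∈ s) ∧ IsBergeCycleOrder C f).card

namespace Aux
open Finset

noncomputable def signOf {n : ℕ} (c : Clause n) (x : Fin n) : Bool :=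
  decide ((x, true) ∈ c.1)

lemma sign_unique {n : ℕ} (c : Clause n) {x : Fin n} {b b' : Bool}
    (h : (x, b) ∈ c.1) (h' : (x, b') ∈ c.1) : b = b' := by
  have hinj : Set.InjOn Prod.fst (c.1 : Set (Lit n)) := by
    rw [← Finset.card_image_iff]; rw [c.2.2, c.2.1]
  have := hinj h h' rfl
  exact congrArg Prod.snd this

lemma mem_clause_iff {n : ℕ} (c : Clause n) (x : Fin n) (b : Bool) :
    (x, b) ∈ c.1 ↔ x ∈ clVars c ∧ b = signOf c x := by
  constructor
  · intro h
    refine ⟨Finset.mem_image_of_mem _ h, ?_⟩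
    cases b with
    | true => simp [signOf, h]
    | false =>
      simp only [signOf]
      by_contra hb
      have ht : (x, true) ∈ c.1 := by
        revert hb; cases hd : decide ((x, true) ∈ c.1) <;> simp_all
      exact absurd (sign_unique c h ht) (by simp)
  · rintro ⟨hx, rfl⟩
    obtain ⟨⟨y, b'⟩, hy, hyx⟩ := Finset.mem_image.mp hx
    simp only at hyx; subst hyx
    cases b' with
    | true =>
      have hs : signOf c y = true := by simp [signOf, hy]
      rw [hs]; exact hy
    | false =>
      have hs : signOf c y = false := by
        simp only [signOf, decide_eq_false_iff_not]
        intro ht; exact absurd (sign_unique c ht hy) (by simp)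
      rw [hs]; exact hy

end Aux

namespace Aux
open Finset

lemma clause_ext {n : ℕ} (c c' : Clause n) (hv : clVars c = clVars c')
    (hs : ∀ x ∈ clVars c, signOf c x = signOf c' x) : c = c' := by
  apply Subtype.ext
  ext ⟨x, b⟩
  rw [mem_clause_iff, mem_clause_iff, hv]
  constructor
  · rintro ⟨hx, rfl⟩; exact ⟨hx, by rw [hs x (hv ▸ hx)]⟩
  · rintro ⟨hx, rfl⟩; exact ⟨hx, (hs x (hv ▸ hx)).symm⟩

noncomputable def mkClause {n : ℕ} (A : Finset (Fin n)) (hA : A.card = 3)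
    (f : Fin n → Bool) : Clause n := by
  refine ⟨A.attach.image (fun v => (v.1, f v.1)), ?_, ?_⟩
  · rw [Finset.card_image_of_injective _
      (fun v w h => Subtype.ext (congrArg Prod.fst h))]
    simpa using hA
  · rw [Finset.image_image]
    have h : (Prod.fst ∘ fun v : {x // x ∈ A} => (v.1, f v.1)) = Subtype.val := rfl
    rw [h, Finset.attach_image_val]
    exact hA

lemma mkClause_val {n : ℕ} (A : Finset (Fin n)) (hA : A.card = 3) (f : Fin n → Bool) :
    (mkClause A hA f).1 = A.attach.image (fun v => (v.1, f v.1)) := rfl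

lemma clVars_mkClause {n : ℕ} (A : Finset (Fin n)) (hA : A.card = 3) (f : Fin n → Bool) :
    clVars (mkClause A hA f) = A := by
  simp only [clVars, mkClause_val, Finset.image_image]
  have h : (Prod.fst ∘ fun v : {x // x ∈ A} => (v.1, f v.1)) = Subtype.val := rfl
  rw [h, Finset.attach_image_val]

lemma signOf_mkClause {n : ℕ} (A : Finset (Fin n)) (hA : A.card = 3) (f : Fin n → Bool)
    {x : Fin n} (hx : x ∈ A) : signOf (mkClause A hA f) x = f x := by
  have hmem : (x, f x) ∈ (mkClause A hA f).1 := by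
    rw [mkClause_val]
    exact Finset.mem_image.mpr ⟨⟨x, hx⟩, Finset.mem_attach _ _, rfl⟩
  exact ((mem_clause_iff _ x (f x)).mp hmem).2.symm

lemma fiber_card {n : ℕ} (A : Finset (Fin n)) (hA : A.card = 3) :
    ((Finset.univ : Finset (Clause n)).filter fun c => clVars c = A).card = 8 := by
  classical
  have h8 : ((Finset.univ : Finset ({x // x ∈ A} → Bool))).card = 8 := by
    rw [Finset.card_univ, Fintype.card_fun]
    simp [Fintype.card_coe, hA]
  rw [← h8]
  apply Finset.card_bij' (i := fun c _ => fun v : {x // x ∈ A} => signOf c v.1)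
    (j := fun f _ => mkClause A hA (fun x => if hx : x ∈ A then f ⟨x, hx⟩ else false))
  · intro c hc; exact Finset.mem_univ _
  · intro f hf
    simp only [Finset.mem_filter, Finset.mem_univ, true_and]
    exact clVars_mkClause A hA _
  · intro c hc
    simp only [Finset.mem_filter, Finset.mem_univ, true_and] at hc
    apply Eq.symm
    apply clause_ext
    · rw [clVars_mkClause, hc]
    · intro x hx
      rw [hc] at hx
      rw [signOf_mkClause A hA _ hx, dif_pos hx]
  · intro f hf
    funext v
    show signOf _ v.1 = f v
    rw [signOf_mkClause A hA _ v.2, dif_pos v.2]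

end Aux

namespace Aux
open Finset

lemma clVars_card {n : ℕ} (c : Clause n) : (clVars c).card = 3 := c.2.2

lemma card_clause (n : ℕ) :
    ((Finset.univ : Finset (Clause n))).card = 8 * n.choose 3 := by
  classical
  rw [Finset.card_eq_sum_card_fiberwise
    (f := fun c : Clause n => clVars c)
    (t := (Finset.univ : Finset (Fin n)).powersetCard 3)
    (fun c _ => Finset.mem_powersetCard.mpr ⟨Finset.subset_univ _, clVars_card c⟩)]
  rw [Finset.sum_congr rfl (fun A hA => fiber_card A (Finset.mem_powersetCard.mp hA).2)]
  rw [Finset.sum_const, Finset.card_powersetCard, Finset.card_univ, Fintype.card_fin,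
    smul_eq_mul, mul_comm]

lemma fiber_card_le {n : ℕ} (A : Finset (Fin n)) :
    ((Finset.univ : Finset (Clause n)).filter fun c => clVars c = A).card ≤ 8 := by
  classical
  by_cases hA : A.card = 3
  · exact le_of_eq (fiber_card A hA)
  · have : ((Finset.univ : Finset (Clause n)).filter fun c => clVars c = A) = ∅ := by
      apply Finset.filter_eq_empty_iff.mpr
      intro c _ h
      exact hA (h ▸ clVars_card c)
    simp [this]

/-- number of clauses containing a fixed variable -/
lemma vertex_count {n : ℕ} (v : Fin n) :
    ((Finset.univ : Finset (Clause n)).filter fun c => v ∈ clVars c).card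
      ≤ 8 * (n - 1).choose 2 := by
  classical
  set s := (Finset.univ : Finset (Clause n)).filter fun c => v ∈ clVars c with hs
  have h1 : s.card ≤ 8 * (s.image clVars).card := by
    apply Finset.card_le_mul_card_image
    intro A _
    calc (s.filter fun c => clVars c = A).card
        ≤ ((Finset.univ : Finset (Clause n)).filter fun c => clVars c = A).card := by
          apply Finset.card_le_card
          intro c hc
          simp only [hs, Finset.mem_filter] at hc ⊢
          exact ⟨Finset.mem_univ _, hc.2⟩
      _ ≤ 8 := fiber_card_le A
  have h2 : (s.image clVars).card ≤ (n - 1).choose 2 := by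
    have hmap : ∀ A ∈ s.image clVars,
        A.erase v ∈ ((Finset.univ : Finset (Fin n)).erase v).powersetCard 2 := by
      intro A hA
      obtain ⟨c, hc, rfl⟩ := Finset.mem_image.mp hA
      simp only [hs, Finset.mem_filter] at hc
      refine Finset.mem_powersetCard.mpr ⟨Finset.erase_subset_erase _ (Finset.subset_univ _), ?_⟩
      rw [Finset.card_erase_of_mem hc.2, clVars_card]
    have hinj : Set.InjOn (fun A => A.erase v) ((s.image clVars) : Set (Finset (Fin n)))  := by
      intro A hA B hB h
      simp only [Finset.coe_image, Set.mem_image, Finset.mem_coe] at hA hB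
      obtain ⟨c, hc, rfl⟩ := hA
      obtain ⟨c', hc', rfl⟩ := hB
      simp only [hs, Finset.mem_filter] at hc hc'
      have hc2 := hc.2; have hc'2 := hc'.2
      simp only at h
      rw [← Finset.insert_erase hc2, ← Finset.insert_erase hc'2, h]
    calc (s.image clVars).card
        ≤ (((Finset.univ : Finset (Fin n)).erase v).powersetCard 2).card :=
          Finset.card_le_card_of_injOn _ hmap hinj
      _ = (n - 1).choose 2 := by
          rw [Finset.card_powersetCard, Finset.card_erase_of_mem (Finset.mem_univ _),
            Finset.card_univ, Fintype.card_fin]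
  calc s.card ≤ 8 * (s.image clVars).card := h1
    _ ≤ 8 * (n - 1).choose 2 := by exact Nat.mul_le_mul_left 8 h2

lemma B1 {n : ℕ} (A : Finset (Fin n)) (hA : A.card = 3) :
    ((Finset.univ : Finset (Clause n)).filter fun c => (A ∩ clVars c).card = 1).card
      ≤ 24 * (n - 1).choose 2 := by
  classical
  have hsub : ((Finset.univ : Finset (Clause n)).filter fun c => (A ∩ clVars c).card = 1)
      ⊆ A.biUnion (fun v => (Finset.univ : Finset (Clause n)).filter fun c => v ∈ clVars c) := by
    intro c hc
    simp only [Finset.mem_filter] at hc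
    obtain ⟨v, hv⟩ := Finset.card_pos.mp (by omega : 0 < (A ∩ clVars c).card)
    have hvA := Finset.mem_of_mem_inter_left hv
    have hvc := Finset.mem_of_mem_inter_right hv
    exact Finset.mem_biUnion.mpr ⟨v, hvA, Finset.mem_filter.mpr ⟨Finset.mem_univ _, hvc⟩⟩
  calc _ ≤ _ := Finset.card_le_card hsub
    _ ≤ ∑ v ∈ A, ((Finset.univ : Finset (Clause n)).filter fun c => v ∈ clVars c).card :=
        Finset.card_biUnion_le
    _ ≤ ∑ _v ∈ A, 8 * (n - 1).choose 2 := Finset.sum_le_sum (fun v _ => vertex_count v)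
    _ = 24 * (n - 1).choose 2 := by rw [Finset.sum_const, hA]; ring

lemma B2 {n : ℕ} (A A' : Finset (Fin n)) (hA : A.card = 3) (hAA' : (A ∩ A').card = 1) :
    ((Finset.univ : Finset (Clause n)).filter fun c =>
        (A ∩ clVars c).card = 1 ∧ Disjoint A' (clVars c)).card
      ≤ 16 * (n - 1).choose 2 := by
  classical
  have hsub : ((Finset.univ : Finset (Clause n)).filter fun c =>
        (A ∩ clVars c).card = 1 ∧ Disjoint A' (clVars c))
      ⊆ (A \ A').biUnion
        (fun v => (Finset.univ : Finset (Clause n)).filter fun c => v ∈ clVars c) := by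
    intro c hc
    simp only [Finset.mem_filter] at hc
    obtain ⟨v, hv⟩ := Finset.card_pos.mp (by omega : 0 < (A ∩ clVars c).card)
    have hvA := Finset.mem_of_mem_inter_left hv
    have hvc := Finset.mem_of_mem_inter_right hv
    have hvA' : v ∉ A' := fun hv' => (Finset.disjoint_left.mp hc.2.2) hv' hvc
    exact Finset.mem_biUnion.mpr
      ⟨v, Finset.mem_sdiff.mpr ⟨hvA, hvA'⟩, Finset.mem_filter.mpr ⟨Finset.mem_univ _, hvc⟩⟩
  have hcard : (A \ A').card = 2 := by
    have := Finset.card_sdiff_add_card_inter A A'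
    omega
  calc _ ≤ _ := Finset.card_le_card hsub
    _ ≤ ∑ v ∈ A \ A', ((Finset.univ : Finset (Clause n)).filter fun c => v ∈ clVars c).card :=
        Finset.card_biUnion_le
    _ ≤ ∑ _v ∈ A \ A', 8 * (n - 1).choose 2 := Finset.sum_le_sum (fun v _ => vertex_count v)
    _ = 16 * (n - 1).choose 2 := by rw [Finset.sum_const, hcard]; ring

end Aux

namespace Aux
open Finset

def QCond (n k : ℕ) (g : Fin k → Clause n) : Prop :=
  (∀ i j : Fin k, (j : ℕ) = (i : ℕ) + 1 → (clVars (g i) ∩ clVars (g j)).card = 1) ∧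
  (∀ i j : Fin k, i ≠ j → (j : ℕ) ≠ (i : ℕ) + 1 → (i : ℕ) ≠ (j : ℕ) + 1 →
    Disjoint (clVars (g i)) (clVars (g j)))

lemma qcount (n : ℕ) : ∀ k : ℕ, 2 ≤ k →
    ((Finset.univ : Finset (Fin k → Clause n)).filter (QCond n k)).card
      ≤ (8 * n.choose 3) * ((24 * (n - 1).choose 2) * (16 * (n - 1).choose 2) ^ (k - 2)) := by
  classical
  refine Nat.le_induction ?_ ?_
  · -- base case k = 2
    set s := ((Finset.univ : Finset (Fin 2 → Clause n)).filter (QCond n 2)) with hs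
    have h1 : s.card ≤ (24 * (n - 1).choose 2) * (s.image (fun g => g 0)).card := by
      apply Finset.card_le_mul_card_image
      intro c0 _
      have : (s.filter fun g => g 0 = c0).card
          ≤ ((Finset.univ : Finset (Clause n)).filter fun c =>
              (clVars c0 ∩ clVars c).card = 1).card := by
        apply Finset.card_le_card_of_injOn (fun g => g 1)
        · intro g hg
          simp only [hs, Finset.mem_coe, Finset.mem_filter] at hg ⊢
          obtain ⟨⟨_, hQ⟩, hg0⟩ := hg
          refine ⟨Finset.mem_univ _, ?_⟩
          rw [← hg0]
          exact hQ.1 0 1 rfl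
        · intro g hg g' hg' h
          simp only [hs, Finset.coe_filter, Set.mem_setOf_eq, Finset.mem_filter] at hg hg'
          funext i
          fin_cases i
          · exact hg.2.trans hg'.2.symm
          · exact h
      calc (s.filter fun g => g 0 = c0).card ≤ _ := this
        _ ≤ 24 * (n - 1).choose 2 := B1 (clVars c0) (clVars_card c0)
    calc s.card ≤ (24 * (n - 1).choose 2) * (s.image (fun g => g 0)).card := h1
      _ ≤ (24 * (n - 1).choose 2) * (8 * n.choose 3) := by
          apply Nat.mul_le_mul_left
          calc (s.image (fun g => g 0)).card
              ≤ ((Finset.univ : Finset (Clause n))).card := Finset.card_le_card (by simp)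
            _ = 8 * n.choose 3 := card_clause n
      _ = (8 * n.choose 3) * ((24 * (n - 1).choose 2) * (16 * (n - 1).choose 2) ^ (2 - 2)) := by
          simp [mul_comm]
  · -- inductive step
    intro k hk IH
    set s := ((Finset.univ : Finset (Fin (k + 1) → Clause n)).filter (QCond n (k + 1))) with hs
    set π : (Fin (k + 1) → Clause n) → (Fin k → Clause n) := fun g => g ∘ Fin.castSucc with hπ
    have hp : k - 1 < k := by omega
    have hq : k - 2 < k := by omega
    set p : Fin k := ⟨k - 1, hp⟩ with hpdef
    set q : Fin k := ⟨k - 2, hq⟩ with hqdef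
    have h1 : s.card ≤ (16 * (n - 1).choose 2) * (s.image π).card := by
      apply Finset.card_le_mul_card_image
      intro h hh
      obtain ⟨g0, hg0s, hg0⟩ := Finset.mem_image.mp hh
      have hQ0 : QCond n (k + 1) g0 := (Finset.mem_filter.mp hg0s).2
      have hhq : h q = g0 q.castSucc := by rw [← hg0]; rfl
      have hhp : h p = g0 p.castSucc := by rw [← hg0]; rfl
      have hqp : (clVars (h q) ∩ clVars (h p)).card = 1 := by
        rw [hhq, hhp]
        exact hQ0.1 q.castSucc p.castSucc (by simp [hpdef, hqdef]; omega)
      have hsub : (s.filter fun g => π g = h).card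
          ≤ ((Finset.univ : Finset (Clause n)).filter fun c =>
              (clVars (h p) ∩ clVars c).card = 1 ∧
                Disjoint (clVars (h q)) (clVars c)).card := by
        apply Finset.card_le_card_of_injOn (fun g => g (Fin.last k))
        · intro g hg
          simp only [Finset.mem_coe, Finset.mem_filter] at hg
          obtain ⟨hgs, hgh⟩ := hg
          have hQ : QCond n (k + 1) g := (Finset.mem_filter.mp hgs).2
          have hgp : h p = g p.castSucc := by rw [← hgh]; rfl
          have hgq : h q = g q.castSucc := by rw [← hgh]; rfl
          refine Finset.mem_filter.mpr ⟨Finset.mem_univ _, ?_, ?_⟩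
          · rw [hgp]
            exact hQ.1 p.castSucc (Fin.last k) (by simp [hpdef]; omega)
          · rw [hgq]
            refine hQ.2 q.castSucc (Fin.last k) ?_ ?_ ?_
            · intro he
              have := congrArg Fin.val he
              simp [hqdef] at this
              omega
            · simp [hqdef]; omega
            · simp [hqdef]; omega
        · intro g hg g' hg' hlast
          simp only [Finset.coe_filter, Set.mem_setOf_eq, Finset.mem_filter] at hg hg'
          funext i
          rcases Fin.eq_castSucc_or_eq_last i with ⟨j, rfl⟩ | rfl
          · have := congrFun (hg.2.trans hg'.2.symm) j
            exact this
          · exact hlast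
      calc (s.filter fun g => π g = h).card ≤ _ := hsub
        _ ≤ 16 * (n - 1).choose 2 := by
            apply B2 (clVars (h p)) (clVars (h q)) (clVars_card _)
            rw [Finset.inter_comm]
            exact hqp
    have h2 : (s.image π) ⊆ (Finset.univ : Finset (Fin k → Clause n)).filter (QCond n k) := by
      intro h hh
      obtain ⟨g, hgs, rfl⟩ := Finset.mem_image.mp hh
      have hQ : QCond n (k + 1) g := (Finset.mem_filter.mp hgs).2
      refine Finset.mem_filter.mpr ⟨Finset.mem_univ _, ?_, ?_⟩
      · intro i j hij
        exact hQ.1 i.castSucc j.castSucc (by simpa using hij)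
      · intro i j hij h1' h2'
        refine hQ.2 i.castSucc j.castSucc (by simpa [Fin.castSucc_inj] using hij)
          (by simpa using h1') (by simpa using h2')
    calc s.card ≤ (16 * (n - 1).choose 2) * (s.image π).card := h1
      _ ≤ (16 * (n - 1).choose 2) *
            ((8 * n.choose 3) * ((24 * (n - 1).choose 2) * (16 * (n - 1).choose 2) ^ (k - 2))) :=
          Nat.mul_le_mul_left _ (le_trans (Finset.card_le_card h2) IH)
      _ = (8 * n.choose 3) *
            ((24 * (n - 1).choose 2) * (16 * (n - 1).choose 2) ^ (k + 1 - 2)) := by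
          have he : k + 1 - 2 = (k - 2) + 1 := by omega
          rw [he, pow_succ]; ring

end Aux

namespace Aux
open Finset

lemma step1 {n m k : ℕ} (hm : 1 ≤ m) (C : SatInstance n m) :
    bergePathSetCount n m k C
      ≤ ((Finset.univ : Finset (Fin k → Fin m)).filter fun f => IsBergePathOrder C f).card := by
  classical
  haveI : Nonempty (Fin m) := ⟨⟨0, hm⟩⟩
  set F : Finset (Fin m) → (Fin k → Fin m) := fun s =>
    if h : ∃ f : Fin k → Fin m, (∀ i, f i ∈ s) ∧ IsBergePathOrder C f then h.choose
    else Classical.arbitrary _ with hF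
  have key : ∀ s ∈ (Finset.univ.filter fun s : Finset (Fin m) =>
      s.card = k ∧ ∃ f : Fin k → Fin m, (∀ i, f i ∈ s) ∧ IsBergePathOrder C f),
      s = Finset.univ.image (F s) ∧ IsBergePathOrder C (F s) := by
    intro s hs
    obtain ⟨-, hcard, hex⟩ := Finset.mem_filter.mp hs
    rw [hF]; simp only [dif_pos hex]
    obtain ⟨hrange, hord⟩ := hex.choose_spec
    refine ⟨?_, hord⟩
    refine (Finset.eq_of_subset_of_card_le ?_ ?_).symm
    · intro i hi
      obtain ⟨j, -, rfl⟩ := Finset.mem_image.mp hi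
      exact hrange j
    · rw [Finset.card_image_of_injective _ hord.1, Finset.card_univ, Fintype.card_fin, hcard]
  apply Finset.card_le_card_of_injOn F
  · intro s hs
    exact Finset.mem_filter.mpr ⟨Finset.mem_univ _, (key s hs).2⟩
  · intro s hs s' hs' h
    rw [(key s hs).1, (key s' hs').1, h]

lemma step3 {n m k : ℕ} (hkm : k ≤ m) (f : Fin k → Fin m) :
    ((Finset.univ : Finset (SatInstance n m)).filter fun C => IsBergePathOrder C f).card
      ≤ (8 * n.choose 3) ^ (m - k) *
        ((Finset.univ : Finset (Fin k → Clause n)).filter (QCond n k)).card := by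
  classical
  by_cases hinj : Function.Injective f
  · set Ψ : SatInstance n m → (Fin k → Clause n) := fun C j => C (f j) with hΨ
    set s := (Finset.univ : Finset (SatInstance n m)).filter fun C => IsBergePathOrder C f
      with hsdef
    set t := (Finset.univ : Finset (Fin k)).image f with htdef
    have hts : t.card = k := by
      rw [htdef, Finset.card_image_of_injective _ hinj, Finset.card_univ, Fintype.card_fin]
    have hcompl : Fintype.card {i : Fin m // i ∉ t} = m - k := by
      rw [Fintype.card_subtype]
      have he : (Finset.univ : Finset (Fin m)).filter (fun i => i ∉ t) = Finset.univ \ t := by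
        ext i; simp [Finset.mem_sdiff]
      rw [he, Finset.card_sdiff_of_subset (Finset.subset_univ _), Finset.card_univ, Fintype.card_fin, hts]
    have h1 : s.card ≤ (8 * n.choose 3) ^ (m - k) * (s.image Ψ).card := by
      apply Finset.card_le_mul_card_image
      intro g _
      calc (s.filter fun C => Ψ C = g).card
          ≤ Fintype.card ({i : Fin m // i ∉ t} → Clause n) := by
            rw [← Finset.card_univ]
            apply Finset.card_le_card_of_injOn (fun C i => C i.1)
              (fun _ _ => Finset.mem_univ _)
            intro C hC C' hC' h
            simp only [Finset.coe_filter, Set.mem_setOf_eq] at hC hC'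
            funext i
            by_cases hi : i ∈ t
            · obtain ⟨j, -, rfl⟩ := Finset.mem_image.mp hi
              have := (hC.2.trans hC'.2.symm)
              exact congrFun this j
            · exact congrFun h ⟨i, hi⟩
        _ = (8 * n.choose 3) ^ (m - k) := by
            rw [Fintype.card_fun, hcompl]
            congr 1
            rw [← Finset.card_univ, card_clause]
    have h2 : s.image Ψ ⊆ (Finset.univ : Finset (Fin k → Clause n)).filter (QCond n k) := by
      intro g hg
      obtain ⟨C, hC, rfl⟩ := Finset.mem_image.mp hg
      obtain ⟨-, hord⟩ := Finset.mem_filter.mp hC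
      exact Finset.mem_filter.mpr ⟨Finset.mem_univ _, hord.2.1, hord.2.2⟩
    calc s.card ≤ (8 * n.choose 3) ^ (m - k) * (s.image Ψ).card := h1
      _ ≤ _ := Nat.mul_le_mul_left _ (Finset.card_le_card h2)
  · have : ((Finset.univ : Finset (SatInstance n m)).filter
        fun C => IsBergePathOrder C f) = ∅ := by
      apply Finset.filter_eq_empty_iff.mpr
      intro C _ h
      exact hinj h.1
    simp [this]

lemma choose_id {n : ℕ} (hn : 1 ≤ n) : n * (n - 1).choose 2 = 3 * n.choose 3 := by
  obtain ⟨n', rfl⟩ : ∃ n', n = n' + 1 := ⟨n - 1, by omega⟩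
  have := Nat.add_one_mul_choose_eq n' 2
  simp only [Nat.succ_eq_add_one, show 2 + 1 = 3 from rfl] at this
  simp only [Nat.add_sub_cancel]
  rw [this, Nat.mul_comm]

end Aux

/-- For `n ≥ 3`, `m ≥ 1`, `k ≥ 2` and `C` drawn uniformly (i.i.d. uniform clauses), the
expected number of `k`-element sets of hyperedge indices of the variable hypergraph of `C`
forming a Berge path of length `k` is at most `m^k · (9/n) · (6/n)^{k−2}`. -/
theorem stmt17 (n m k : ℕ) (hn : 3 ≤ n) (hm : 1 ≤ m) (hk : 2 ≤ k) :
    (∑ C : SatInstance n m, (bergePathSetCount n m k C : ℝ))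
        / (Fintype.card (SatInstance n m) : ℝ)
      ≤ (m : ℝ) ^ k * (9 / (n : ℝ)) * (6 / (n : ℝ)) ^ (k - 2) := by
  classical
  open Finset Aux in
  by_cases hkm : k ≤ m
  case neg =>
    have hzero : ∀ C : SatInstance n m, bergePathSetCount n m k C = 0 := by
      intro C
      rw [bergePathSetCount, Finset.card_eq_zero]
      apply Finset.filter_eq_empty_iff.mpr
      rintro s - ⟨hcard, -⟩
      have := Finset.card_le_univ s
      rw [Fintype.card_fin] at this
      omega
    simp only [hzero, Nat.cast_zero, Finset.sum_const_zero, zero_div]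
    positivity
  case pos =>
  set M := 8 * n.choose 3 with hMdef
  set a := 24 * (n - 1).choose 2 with hadef
  set b := 16 * (n - 1).choose 2 with hbdef
  have hMpos : 0 < M := by
    have := Nat.choose_pos hn
    omega
  have hkey : n * (n - 1).choose 2 = 3 * n.choose 3 := choose_id (by omega)
  -- natural-number bound on the numerator
  have natbound : (∑ C : SatInstance n m, bergePathSetCount n m k C)
      ≤ m ^ k * (M ^ (m - k) * (M * (a * b ^ (k - 2)))) := by
    calc (∑ C : SatInstance n m, bergePathSetCount n m k C)
        ≤ ∑ C : SatInstance n m,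
            ((Finset.univ : Finset (Fin k → Fin m)).filter
              fun f => IsBergePathOrder C f).card :=
          Finset.sum_le_sum (fun C _ => step1 hm C)
      _ = ∑ f : Fin k → Fin m,
            ((Finset.univ : Finset (SatInstance n m)).filter
              fun C => IsBergePathOrder C f).card := by
          simp only [Finset.card_filter]
          exact Finset.sum_comm
      _ ≤ ∑ _f : Fin k → Fin m,
            (M ^ (m - k) *
              ((Finset.univ : Finset (Fin k → Clause n)).filter (QCond n k)).card) :=
          Finset.sum_le_sum (fun f _ => step3 hkm f)
      _ = m ^ k * (M ^ (m - k) *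
            ((Finset.univ : Finset (Fin k → Clause n)).filter (QCond n k)).card) := by
          rw [Finset.sum_const, Finset.card_univ, Fintype.card_fun, Fintype.card_fin,
            Fintype.card_fin, smul_eq_mul]
      _ ≤ m ^ k * (M ^ (m - k) * (M * (a * b ^ (k - 2)))) := by
          apply Nat.mul_le_mul_left
          apply Nat.mul_le_mul_left
          exact qcount n k hk
  -- cast to the reals
  have hden : (Fintype.card (SatInstance n m) : ℝ) = ((M : ℝ)) ^ m := by
    rw [Fintype.card_fun, Fintype.card_fin]
    push_cast
    congr 2
    rw [← Finset.card_univ, card_clause]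
  have hn0 : (0 : ℝ) < (n : ℝ) := by
    have : 0 < n := by omega
    exact_mod_cast this
  have hM0 : (0 : ℝ) < (M : ℝ) := by exact_mod_cast hMpos
  have h9 : (a : ℝ) / (M : ℝ) = 9 / (n : ℝ) := by
    rw [div_eq_div_iff hM0.ne' hn0.ne']
    have hnat : a * n = 9 * M := by
      calc a * n = 24 * (n * (n - 1).choose 2) := by rw [hadef]; ring
        _ = 24 * (3 * n.choose 3) := by rw [hkey]
        _ = 9 * M := by rw [hMdef]; ring
    exact_mod_cast hnat
  have h6 : (b : ℝ) / (M : ℝ) = 6 / (n : ℝ) := by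
    rw [div_eq_div_iff hM0.ne' hn0.ne']
    have hnat : b * n = 6 * M := by
      calc b * n = 16 * (n * (n - 1).choose 2) := by rw [hbdef]; ring
        _ = 16 * (3 * n.choose 3) := by rw [hkey]
        _ = 6 * M := by rw [hMdef]; ring
    exact_mod_cast hnat
  have hsplit : ((M : ℝ)) ^ m = (M : ℝ) ^ (m - k) * ((M : ℝ) * ((M : ℝ) * (M : ℝ) ^ (k - 2))) := by
    have he : m = (m - k) + (1 + (1 + (k - 2))) := by omega
    calc ((M : ℝ)) ^ m = (M : ℝ) ^ ((m - k) + (1 + (1 + (k - 2)))) := by rw [← he]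
      _ = _ := by rw [pow_add, pow_add, pow_add, pow_one]
  have hcastsum : (∑ C : SatInstance n m, (bergePathSetCount n m k C : ℝ))
      = ((∑ C : SatInstance n m, bergePathSetCount n m k C : ℕ) : ℝ) := by
    push_cast
    rfl
  rw [hcastsum, hden]
  have hstep : ((∑ C : SatInstance n m, bergePathSetCount n m k C : ℕ) : ℝ) / (M : ℝ) ^ m
      ≤ ((m ^ k * (M ^ (m - k) * (M * (a * b ^ (k - 2)))) : ℕ) : ℝ) / (M : ℝ) ^ m := by
    have := (Nat.cast_le (α := ℝ)).mpr natbound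
    gcongr
  refine le_trans hstep (le_of_eq ?_)
  push_cast
  rw [← h9, ← h6, hsplit, div_pow]
  field_simp
  try ring
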